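/- Let q be a prime power, s ≥ 1 an integer, and e_1, …, e_s distinct non-negative integers. Then the number S_{e_1,…,e_s}(q) of dynamical-equivalence classes among the maps F_q → F_q of the form x ↦ a_1 x^{e_1} + … + a_s x^{e_s} with a_1, …, a_s ∈ F_q^* satisfies S_{e_1,…,e_s}(q) ≤ (q−1)^{s−1} · gcd(e_1−1, …, e_s−1, q−1). -/

import Mathlib

/-- Two self-maps `f g : α → α` are dynamically equivalent if there is a bijection
`σ : α → α` with `σ⁻¹ ∘ g ∘ σ = f`. -/
def DynEquiv {α : Type*} (f g : α → α) : Prop :=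
  ∃ σ : Equiv.Perm α, ∀ x, σ.symm (g (σ x)) = f x

/-- The number of dynamical-equivalence classes represented by the elements of a set `S`
of self-maps. -/
noncomputable def numDynClasses {α : Type*} (S : Set (α → α)) : ℕ :=
  Nat.card (Quot (fun f g : S => DynEquiv f.1 g.1))

theorem stmt0 {F : Type*} [Field F] [Fintype F] (q : ℕ) (hq : Fintype.card F = q)
    (s : ℕ) (hs : 1 ≤ s) (e : Fin s → ℕ) (he : Function.Injective e) :
    numDynClasses {f : F → F | ∃ a : Fin s → Fˣ, f = fun x => ∑ i, (a i : F) * x ^ (e i)} ≤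
      (q - 1) ^ (s - 1) *
        Int.gcd (Finset.univ.gcd fun i : Fin s => (e i : ℤ) - 1) ((q : ℤ) - 1) := by
  classical
  have hq2 : 2 ≤ q := hq ▸ Fintype.one_lt_card
  set d : Fin s → ℤ := fun i => (e i : ℤ) - 1 with hd
  set h : Fˣ →* (Fin s → Fˣ) := Pi.monoidHom (fun i => zpowGroupHom (d i)) with hh
  set H : Subgroup (Fin s → Fˣ) := h.range with hH
  set fS : (Fin s → Fˣ) → (F → F) := fun a x => ∑ i, (a i : F) * x ^ (e i) with hfS
  set S : Set (F → F) := {f : F → F | ∃ a : Fin s → Fˣ, f = fun x => ∑ i, (a i : F) * x ^ (e i)}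
    with hS
  -- conjugation lemma
  have conj : ∀ (a : Fin s → Fˣ) (c : Fˣ), DynEquiv (fS a) (fS (a * h c)) := by
    intro a c
    have hc : (c : F) ≠ 0 := c.ne_zero
    refine ⟨⟨fun x => (c : F)⁻¹ * x, fun x => (c : F) * x, fun x => by field_simp,
      fun x => by field_simp⟩, fun x => ?_⟩
    show (c : F) * (∑ i, (((a * h c) i : Fˣ) : F) * ((c : F)⁻¹ * x) ^ e i)
        = ∑ i, (a i : F) * x ^ e i
    rw [Finset.mul_sum]
    refine Finset.sum_congr rfl fun i _ => ?_
    have hcoe : (((a * h c) i : Fˣ) : F) = (a i : F) * (c : F) ^ ((e i : ℤ) - 1) := by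
      simp [hh, Pi.monoidHom, zpowGroupHom, Units.val_zpow_eq_zpow_val, hd]
    rw [hcoe, zpow_sub_one₀ hc, zpow_natCast, mul_pow]
    field_simp
    ring_nf
    rw [← mul_pow, mul_inv_cancel₀ hc, one_pow, one_mul]
  -- the quotient map
  set r : S → S → Prop := fun f g => DynEquiv f.1 g.1 with hr
  set Φ : (Fin s → Fˣ) → Quot r := fun a => Quot.mk r ⟨fS a, ⟨a, rfl⟩⟩ with hΦ
  have hresp : ∀ a b : Fin s → Fˣ, QuotientGroup.leftRel H a b → Φ a = Φ b := by
    intro a b hab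
    rw [QuotientGroup.leftRel_apply] at hab
    obtain ⟨c, hc⟩ := hab
    have hb : b = a * h c := by rw [hc]; group
    subst hb
    exact Quot.sound (conj a c)
  set Φ' : ((Fin s → Fˣ) ⧸ H) → Quot r := Quotient.lift Φ hresp with hΦ'
  have hsurj : Function.Surjective Φ' := by
    intro y
    obtain ⟨⟨f, hf⟩, rfl⟩ := Quot.exists_rep y
    obtain ⟨a, rfl⟩ := hf
    exact ⟨QuotientGroup.mk a, rfl⟩
  have hcard : numDynClasses S ≤ Nat.card ((Fin s → Fˣ) ⧸ H) :=
    Nat.card_le_card_of_surjective Φ' hsurj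
  -- cardinalities
  have hcFu : Nat.card Fˣ = q - 1 := by
    rw [Nat.card_eq_fintype_card, Fintype.card_units, hq]
  have hcA : Nat.card (Fin s → Fˣ) = (q - 1) ^ s := by
    rw [Nat.card_pi]
    simp only [hcFu, Finset.prod_const, Finset.card_univ, Fintype.card_fin]
  set k : ℕ := Nat.card h.ker with hk
  have hHk : Nat.card H * k = q - 1 := by
    rw [hk, hH, ← Nat.card_congr (QuotientGroup.quotientKerEquivRange h).toEquiv,
      ← Subgroup.card_eq_card_quotient_mul_card_subgroup, hcFu]
  have hlag : Nat.card ((Fin s → Fˣ) ⧸ H) * Nat.card H = (q - 1) ^ s := by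
    rw [← hcA]
    exact (Subgroup.card_eq_card_quotient_mul_card_subgroup H).symm
  have hHpos : 0 < Nat.card H := Nat.card_pos
  have hQ : Nat.card ((Fin s → Fˣ) ⧸ H) = (q - 1) ^ (s - 1) * k := by
    have h1 : Nat.card ((Fin s → Fˣ) ⧸ H) * Nat.card H = ((q - 1) ^ (s - 1) * k) * Nat.card H := by
      rw [hlag]
      have : (q - 1) ^ s = (q - 1) ^ (s - 1) * (q - 1) := by
        conv_lhs => rw [← Nat.succ_pred_eq_of_pos hs, pow_succ]
        rw [Nat.pred_eq_sub_one]
      rw [this, ← hHk]; ring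
    exact Nat.eq_of_mul_eq_mul_right hHpos h1
  -- k divides the gcd
  set g : ℕ := Int.gcd (Finset.univ.gcd fun i : Fin s => (e i : ℤ) - 1) ((q : ℤ) - 1) with hg
  have hkq : (k : ℤ) ∣ (q : ℤ) - 1 := by
    have h1 : k ∣ q - 1 := hcFu ▸ Subgroup.card_subgroup_dvd_card h.ker
    have h2 : ((q - 1 : ℕ) : ℤ) = (q : ℤ) - 1 := by
      push_cast [Nat.cast_sub (by omega : 1 ≤ q)]; ring
    exact h2 ▸ Int.natCast_dvd_natCast.mpr h1
  have hkd : ∀ i : Fin s, (k : ℤ) ∣ d i := by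
    obtain ⟨γ, hγ⟩ := IsCyclic.exists_generator (α := h.ker)
    have hord : orderOf γ = k := orderOf_eq_card_of_forall_mem_zpowers hγ
    have hord' : orderOf ((γ : Fˣ)) = k := by
      rw [Subgroup.orderOf_coe, hord]
    intro i
    have hγ1 : (γ : Fˣ) ^ (d i) = 1 := by
      have := γ.2
      rw [MonoidHom.mem_ker] at this
      have := congrFun this i
      simpa [hh, Pi.monoidHom, zpowGroupHom] using this
    rw [← hord']
    exact orderOf_dvd_iff_zpow_eq_one.mpr hγ1
  have hkg : k ∣ g := by
    have : (k : ℤ) ∣ (g : ℤ) :=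
      Int.dvd_coe_gcd (Finset.dvd_gcd fun i _ => hkd i) hkq
    exact_mod_cast this
  have hgpos : 0 < g := by
    rcases Nat.eq_zero_or_pos g with h0 | h0
    · exfalso
      rw [hg, Int.gcd_eq_zero_iff] at h0
      omega
    · exact h0
  calc numDynClasses S ≤ Nat.card ((Fin s → Fˣ) ⧸ H) := hcard
    _ = (q - 1) ^ (s - 1) * k := hQ
    _ ≤ (q - 1) ^ (s - 1) * g := Nat.mul_le_mul_left _ (Nat.le_of_dvd hgpos hkg)
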